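/- Let G be a finite group such that G/Z(G) is a simple group. Then the derived subgroup G' of G is perfect (G'' = G'), the center of G' equals Z(G) ∩ G', and G/Z(G) is isomorphic to G'/Z(G'); in particular G and G' are isoclinic. -/

import Mathlib

/-- `cent G` is the set of centralizers of elements of `G`, as subgroups of `G`. -/
def cent (G : Type*) [Group G] : Set (Subgroup G) :=
  Set.range fun g : G => Subgroup.centralizer {g}

/-- `nacent G` is the set of non-abelian centralizers of elements of `G`. -/
def nacent (G : Type*) [Group G] : Set (Subgroup G) :=
  {C | C ∈ cent G ∧ ¬ IsMulCommutative C}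


open scoped commutatorElement

lemma comm_central_left {G : Type*} [Group G] (z : G) (hz : z ∈ Subgroup.center G)
    (a b : G) : ⁅a * z, b⁆ = ⁅a, b⁆ := by
  have h : ∀ g : G, z * g = g * z := fun g => ((Subgroup.mem_center_iff.mp hz) g).symm
  simp only [commutatorElement_def, mul_inv_rev]
  rw [mul_assoc a z b, h b, ← mul_assoc a b z, ← mul_assoc, mul_assoc (a*b) z z⁻¹,
    mul_inv_cancel, mul_one]

lemma comm_central_right {G : Type*} [Group G] (z : G) (hz : z ∈ Subgroup.center G)
    (a b : G) : ⁅a, b * z⁆ = ⁅a, b⁆ := by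
  rw [← commutatorElement_inv, comm_central_left z hz, commutatorElement_inv]

theorem isoclinic_commutator_of_central_quotient_simple (G : Type*) [Group G] [Finite G]
    (hsimple : IsSimpleGroup (G ⧸ Subgroup.center G)) :
    ⁅commutator G, commutator G⁆ = commutator G ∧
      (Subgroup.center (commutator G)).map (commutator G).subtype =
        Subgroup.center G ⊓ commutator G ∧
      Nonempty ((G ⧸ Subgroup.center G) ≃*
        (commutator G ⧸ Subgroup.center (commutator G))) := by
  set Z := Subgroup.center G with hZ
  set π := QuotientGroup.mk' Z with hπ
  have hπsurj : Function.Surjective π := QuotientGroup.mk'_surjective Z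
  -- the quotient is not abelian
  have hnc : commutator (G ⧸ Z) = ⊤ := by
    rcases (Subgroup.commutator_normal (⊤ : Subgroup (G ⧸ Z)) ⊤).eq_bot_or_eq_top with h | h
    · exfalso
      have hcomm : ∀ a b : G ⧸ Z, a * b = b * a := by
        intro a b
        have hb : b ∈ Subgroup.centralizer ((⊤ : Subgroup (G ⧸ Z)) : Set (G ⧸ Z)) :=
          Subgroup.commutator_eq_bot_iff_le_centralizer.mp h (Subgroup.mem_top b)
        exact hb a (Subgroup.mem_top a)
      letI cg : CommGroup (G ⧸ Z) :=
        { (inferInstance : Group (G ⧸ Z)) with mul_comm := hcomm }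
      haveI : IsCyclic (G ⧸ Z) := @IsSimpleGroup.isCyclic _ cg hsimple
      have hGc : ∀ a b : G, a * b = b * a := by
        apply commutative_of_cyclic_center_quotient π
        rw [hπ, QuotientGroup.ker_mk']
      have hZtop : Z = ⊤ := by
        rw [eq_top_iff]
        intro g _
        exact Subgroup.mem_center_iff.mpr fun h => hGc h g
      have hs : Subsingleton (G ⧸ Z) := by
        rw [hZtop]
        exact QuotientGroup.subsingleton_quotient_top
      exact (not_subsingleton (G ⧸ Z)) hs
    · exact h
  -- map of commutator G is everything
  have hmapD : (commutator G).map π = ⊤ := by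
    rw [commutator_def, Subgroup.map_commutator, Subgroup.map_top_of_surjective π hπsurj,
      ← commutator_def, hnc]
  have hmapD' : (⁅commutator G, commutator G⁆).map π = ⊤ := by
    rw [Subgroup.map_commutator, hmapD, ← commutator_def, hnc]
  -- decomposition lemma
  have hdecomp : ∀ (H : Subgroup G), H.map π = ⊤ →
      ∀ g : G, ∃ h ∈ H, ∃ z ∈ Z, g = h * z := by
    intro H hH g
    have hg : π g ∈ H.map π := by rw [hH]; exact Subgroup.mem_top _
    obtain ⟨h, hh, hhg⟩ := hg
    obtain ⟨z, hz, hmul⟩ := (QuotientGroup.mk'_eq_mk' Z).mp hhg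
    exact ⟨h, hh, z, hz, hmul.symm⟩
  -- part 1
  have part1 : ⁅commutator G, commutator G⁆ = commutator G := by
    apply le_antisymm
    · rw [commutator_def]
      exact Subgroup.commutator_mono le_top le_top
    · rw [commutator_def (G := G), Subgroup.commutator_le]
      intro g₁ _ g₂ _
      obtain ⟨h₁, hh₁, z₁, hz₁, rfl⟩ := hdecomp _ hmapD' g₁
      obtain ⟨h₂, hh₂, z₂, hz₂, rfl⟩ := hdecomp _ hmapD' g₂
      rw [comm_central_left z₁ hz₁, comm_central_right z₂ hz₂]
      exact Subgroup.commutator_mem_commutator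
        (Subgroup.commutator_mono le_top le_top (commutator_def G ▸ hh₁))
        (Subgroup.commutator_mono le_top le_top (commutator_def G ▸ hh₂))
  have part2 : (Subgroup.center (commutator G)).map (commutator G).subtype =
      Z ⊓ commutator G := by
    ext x
    simp only [Subgroup.mem_map, Subgroup.mem_inf]
    constructor
    · rintro ⟨d, hd, rfl⟩
      refine ⟨Subgroup.mem_center_iff.mpr fun g => ?_, d.2⟩
      obtain ⟨h, hh, z, hz, rfl⟩ := hdecomp _ hmapD g
      have hcomm : h * (d : G) = (d : G) * h :=
        congrArg Subtype.val (Subgroup.mem_center_iff.mp hd ⟨h, hh⟩)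
      have hzd : z * (d : G) = (d : G) * z := (Subgroup.mem_center_iff.mp hz (d : G)).symm
      show h * z * (d : G) = (d : G) * (h * z)
      rw [mul_assoc, hzd, ← mul_assoc, hcomm, mul_assoc]
    · rintro ⟨hxZ, hxD⟩
      exact ⟨⟨x, hxD⟩, Subgroup.mem_center_iff.mpr fun e =>
        Subtype.ext (Subgroup.mem_center_iff.mp hxZ e), rfl⟩
  refine ⟨part1, part2, ?_⟩
  -- part 3
  let f : commutator G →* G ⧸ Z := π.comp (commutator G).subtype
  have hfsurj : Function.Surjective f := by
    intro q
    obtain ⟨g, rfl⟩ := hπsurj q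
    obtain ⟨h, hh, z, hz, rfl⟩ := hdecomp _ hmapD g
    exact ⟨⟨h, hh⟩, ((QuotientGroup.mk'_eq_mk' Z).mpr ⟨z, hz, rfl⟩ : π h = π (h * z))⟩
  have hker : f.ker = Subgroup.center (commutator G) := by
    ext x
    rw [MonoidHom.mem_ker]
    have h1 : f x = 1 ↔ (x : G) ∈ Z :=
      QuotientGroup.eq_one_iff (x : G)
    rw [h1]
    constructor
    · intro hxZ
      exact Subgroup.mem_center_iff.mpr fun e =>
        Subtype.ext (Subgroup.mem_center_iff.mp hxZ e)
    · intro hx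
      have : (x : G) ∈ Z ⊓ commutator G := by
        rw [← part2]
        exact Subgroup.mem_map_of_mem _ hx
      exact this.1
  exact ⟨(QuotientGroup.quotientKerEquivOfSurjective f hfsurj).symm.trans
    (QuotientGroup.quotientMulEquivOfEq hker)⟩
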